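/- Extensional common reducts imply observational equivalence: let M and N be terms of arity k under P such that for all terms t₁,…,tₖ, M.t₁.···.tₖ =_P N.t₁.···.tₖ (common reduct). Then M ≈_P N. In particular (k=0), complete terms with a common reduct are observationally equivalent. -/

import Mathlib

/-- Terms of continuation calculus: names (coded as naturals) and dot. -/
inductive Tm where
  | name : ℕ → Tm
  | dot : Tm → Tm → Tm
deriving DecidableEq

/-- Right-hand sides of rules: names, variables (de Bruijn-style indices
into the left-hand side's variable list), and dot. -/
inductive Rhs where
  | name : ℕ → Rhs
  | var : ℕ → Rhs
  | dot : Rhs → Rhs → Rhs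
deriving DecidableEq

/-- A rule `n.x₁.⋯.xₖ → r`: head name, arity `k`, and right-hand side. -/
structure Rule where
  head : ℕ
  arity : ℕ
  rhs : Rhs
deriving DecidableEq

/-- A program is a finite set of rules. -/
abbrev Program := Finset Rule

/-- Variables occurring in a right-hand side. -/
def Rhs.HasVar : Rhs → ℕ → Prop
  | .name _, _ => False
  | .var w, v => w = v
  | .dot a b, v => a.HasVar v ∨ b.HasVar v

/-- Well-formedness: every variable of a right-hand side occurs in the
left-hand side, and there is at most one rule per head name. -/
def Program.Wf (P : Program) : Prop :=
  (∀ r ∈ P, ∀ v, r.rhs.HasVar v → v < r.arity) ∧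
  (∀ r₁ ∈ P, ∀ r₂ ∈ P, r₁.head = r₂.head → r₁ = r₂)

/-- `n.t₁.⋯.tₖ` : left-associated application of a term to a list of terms. -/
def Tm.apps : Tm → List Tm → Tm
  | h, [] => h
  | h, t :: ts => Tm.apps (h.dot t) ts

/-- Instantiation of a right-hand side with the terms matched by the
left-hand side variables; fails if some variable is out of range. -/
def Rhs.inst (ts : List Tm) : Rhs → Option Tm
  | .name n => some (.name n)
  | .var v => ts[v]?
  | .dot a b => do pure (.dot (← a.inst ts) (← b.inst ts))

/-- One-step evaluation `M →_P N`. -/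
def Step (P : Program) (M N : Tm) : Prop :=
  ∃ r ∈ P, ∃ ts : List Tm, ts.length = r.arity ∧
    M = Tm.apps (.name r.head) ts ∧ r.rhs.inst ts = some N

/-- Multi-step evaluation `M →*_P N`. -/
def Steps (P : Program) : Tm → Tm → Prop := Relation.ReflTransGen (Step P)

/-- `M` is final: it has no successor. -/
def Final (P : Program) (M : Tm) : Prop := ¬ ∃ N, Step P M N

/-- `M` terminates: it evaluates to a final term. -/
def Terminates (P : Program) (M : Tm) : Prop := ∃ N, Steps P M N ∧ Final P N

/-- The name `m` occurs in a term. -/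
def Tm.HasName (m : ℕ) : Tm → Prop
  | .name n => n = m
  | .dot a b => a.HasName m ∨ b.HasName m

/-- The name `m` occurs in a right-hand side. -/
def Rhs.HasName (m : ℕ) : Rhs → Prop
  | .name n => n = m
  | .var _ => False
  | .dot a b => a.HasName m ∨ b.HasName m

/-- The name `m` occurs (is mentioned) in a program. -/
def Program.HasName (P : Program) (m : ℕ) : Prop :=
  ∃ r ∈ P, r.head = m ∨ r.rhs.HasName m

/-- The name `m` is defined by the program (is the head of some rule). -/
def Program.Defines (P : Program) (m : ℕ) : Prop :=
  ∃ r ∈ P, r.head = m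

/-- Substitution of a term for a name, `M[fr := t]`. -/
def Tm.subName (m : ℕ) (t : Tm) : Tm → Tm
  | .name n => if n = m then t else .name n
  | .dot a b => .dot (Tm.subName m t a) (Tm.subName m t b)

/-- Common reduct relation `M =_P N`. -/
def CommonRed (P : Program) (M N : Tm) : Prop :=
  ∃ t, Steps P M t ∧ Steps P N t

/-- Observational equivalence `M ≈_P N`. -/
def ObsEq (P : Program) (M N : Tm) : Prop :=
  ∀ P' : Program, P'.Wf → P ⊆ P' →
    ∀ X : Tm, (Terminates P' (X.dot M) ↔ Terminates P' (X.dot N))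

/-- Renaming of names in a term. -/
def Tm.rename (f : ℕ → ℕ) : Tm → Tm
  | .name n => .name (f n)
  | .dot a b => .dot (a.rename f) (b.rename f)

/-- Renaming of names in a right-hand side. -/
def Rhs.rename (f : ℕ → ℕ) : Rhs → Rhs
  | .name n => .name (f n)
  | .var v => .var v
  | .dot a b => .dot (a.rename f) (b.rename f)

/-- Renaming of names in a rule. -/
def Rule.rename (f : ℕ → ℕ) (r : Rule) : Rule :=
  ⟨f r.head, r.arity, r.rhs.rename f⟩

/-- Renaming of names in a program. -/
def Program.rename (f : ℕ → ℕ) (P : Program) : Program :=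
  P.image (Rule.rename f)

/-- The fresh substitution `[n⃗ := m⃗]` as a function on names. -/
def renFun (ns ms : List ℕ) (n : ℕ) : ℕ :=
  ((ns.zip ms).lookup n).getD n

/-- `M` has arity `k` under `P`: `M = n.q₁.⋯.qᵢ` where `n` has a rule of
arity `i + k`. -/
def Tm.ArityIs (P : Program) (M : Tm) (k : ℕ) : Prop :=
  ∃ r ∈ P, ∃ ts : List Tm, M = Tm.apps (.name r.head) ts ∧ ts.length + k = r.arity


/-! ### Auxiliary development -/

section Aux

lemma apps_append (t : Tm) (l : List Tm) (b : Tm) :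
    Tm.apps t (l ++ [b]) = (Tm.apps t l).dot b := by
  induction l generalizing t with
  | nil => rfl
  | cons a l ih => simpa [Tm.apps] using ih (t.dot a)

lemma apps_apps (t : Tm) (l l' : List Tm) :
    Tm.apps (Tm.apps t l) l' = Tm.apps t (l ++ l') := by
  induction l generalizing t with
  | nil => rfl
  | cons a l ih => simpa [Tm.apps] using ih (t.dot a)

/-- Spine decomposition of a term. -/
def Tm.spine : Tm → ℕ × List Tm
  | .name n => (n, [])
  | .dot a b => (a.spine.1, a.spine.2 ++ [b])

lemma spine_apps' (t : Tm) (l : List Tm) :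
    (Tm.apps t l).spine = (t.spine.1, t.spine.2 ++ l) := by
  induction l generalizing t with
  | nil => simp [Tm.apps]
  | cons a l ih => simp [Tm.apps, ih (t.dot a), Tm.spine]

lemma spine_apps (h : ℕ) (l : List Tm) :
    (Tm.apps (.name h) l).spine = (h, l) := by
  simp [spine_apps', Tm.spine]

lemma apps_injective {h h' : ℕ} {l l' : List Tm}
    (e : Tm.apps (.name h) l = Tm.apps (.name h') l') : h = h' ∧ l = l' := by
  have := congrArg Tm.spine e
  rw [spine_apps, spine_apps] at this
  exact ⟨congrArg Prod.fst this, congrArg Prod.snd this⟩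

lemma eq_apps_spine (t : Tm) : t = Tm.apps (.name t.spine.1) t.spine.2 := by
  induction t with
  | name n => rfl
  | dot a b iha _ =>
      simp only [Tm.spine]
      rw [apps_append, ← iha]

lemma steps_mono {P P' : Program} (hsub : P ⊆ P') {a b : Tm}
    (h : Steps P a b) : Steps P' a b := by
  induction h with
  | refl => exact .refl
  | tail _ hs ih =>
      refine ih.tail ?_
      obtain ⟨r, hr, ts, h1, h2, h3⟩ := hs
      exact ⟨r, hsub hr, ts, h1, h2, h3⟩

lemma step_det {P' : Program} (hP' : P'.Wf) {S A B : Tm}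
    (h1 : Step P' S A) (h2 : Step P' S B) : A = B := by
  obtain ⟨r₁, hr₁, ts₁, hl₁, he₁, hi₁⟩ := h1
  obtain ⟨r₂, hr₂, ts₂, hl₂, he₂, hi₂⟩ := h2
  rw [he₁] at he₂
  obtain ⟨hh, hts⟩ := apps_injective he₂
  have : r₁ = r₂ := hP'.2 r₁ hr₁ r₂ hr₂ hh
  subst this; subst hts
  rw [hi₁] at hi₂
  exact Option.some.inj hi₂

lemma det_triangle {P' : Program} (hP' : P'.Wf) {A t f : Tm}
    (h1 : Steps P' A t) (h2 : Steps P' A f) (hf : Final P' f) : Steps P' t f := by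
  revert h2
  induction h1 using Relation.ReflTransGen.head_induction_on with
  | refl => exact fun h2 => h2
  | head hAc hct ih =>
      intro h2
      rcases Relation.ReflTransGen.cases_head h2 with rfl | ⟨d, hAd, hdf⟩
      · exact absurd ⟨_, hAc⟩ hf
      · have heq : _ = d := step_det hP' hAc hAd
        subst heq
        exact ih hdf

lemma terminates_of_commonRed {P' : Program} (hP' : P'.Wf) {A B : Tm}
    (h : CommonRed P' A B) (hA : Terminates P' A) : Terminates P' B := by
  obtain ⟨t, hAt, hBt⟩ := h
  obtain ⟨f, hAf, hf⟩ := hA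
  exact ⟨f, hBt.trans (det_triangle hP' hAt hAf hf), hf⟩

lemma inst_dot (a b : Rhs) (ts : List Tm) :
    (Rhs.dot a b).inst ts =
      (a.inst ts).bind fun x => (b.inst ts).bind fun y => some (x.dot y) := rfl

lemma inst_total {ss : List Tm} :
    ∀ r : Rhs, (∀ v, r.HasVar v → v < ss.length) → ∃ A, r.inst ss = some A := by
  intro r
  induction r with
  | name n => exact fun _ => ⟨_, rfl⟩
  | var v =>
      intro h
      have hv : v < ss.length := h v rfl
      exact ⟨ss[v], List.getElem?_eq_getElem hv⟩
  | dot a b iha ihb =>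
      intro h
      obtain ⟨A, hA⟩ := iha fun v hv => h v (Or.inl hv)
      obtain ⟨B, hB⟩ := ihb fun v hv => h v (Or.inr hv)
      exact ⟨A.dot B, by rw [inst_dot, hA, hB]; rfl⟩

lemma forall₂_append' {α β : Type*} {R : α → β → Prop} {l₁ u₁ : List α} {l₂ u₂ : List β}
    (h1 : List.Forall₂ R l₁ l₂) (h2 : List.Forall₂ R u₁ u₂) :
    List.Forall₂ R (l₁ ++ u₁) (l₂ ++ u₂) := List.rel_append h1 h2

/-- Terms equal up to replacing some occurrences of `M` by `N`. -/
inductive MRel (M N : Tm) : Tm → Tm → Prop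
  | refl (t : Tm) : MRel M N t t
  | base : MRel M N M N
  | dot {a a' b b' : Tm} : MRel M N a a' → MRel M N b b' → MRel M N (a.dot b) (a'.dot b')

lemma rel_refl_forall₂ (M N : Tm) (l : List Tm) : List.Forall₂ (MRel M N) l l :=
  List.forall₂_same.mpr fun x _ => .refl x

lemma forall₂_get? {α β : Type*} {R : α → β → Prop} {l₁ : List α} {l₂ : List β}
    (h : List.Forall₂ R l₁ l₂) :
    ∀ {n : ℕ} {a : α}, l₁[n]? = some a → ∃ b, l₂[n]? = some b ∧ R a b := by
  induction h with
  | nil => intro n a h; simp at h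
  | cons hab _ ih =>
      intro n a h
      cases n with
      | zero =>
          simp only [List.getElem?_cons_zero, Option.some.injEq] at h; subst h
          exact ⟨_, rfl, hab⟩
      | succ n => exact ih (by simpa using h)

lemma rel_inst {M N : Tm} {ss ts : List Tm} (h : List.Forall₂ (MRel M N) ss ts) :
    ∀ r : Rhs, ∀ A, r.inst ss = some A → ∃ B, r.inst ts = some B ∧ MRel M N A B := by
  intro r
  induction r with
  | name n =>
      intro A hA
      simp only [Rhs.inst, Option.some.injEq] at hA
      exact ⟨A, by simp [Rhs.inst, hA], .refl A⟩
  | var v => intro A hA; exact forall₂_get? (n := v) h hA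
  | dot a b iha ihb =>
      intro A hA
      rw [inst_dot] at hA
      simp only [Option.bind_eq_some_iff, Option.some.injEq] at hA
      obtain ⟨x, hx, y, hy, rfl⟩ := hA
      obtain ⟨x', hx', hRx⟩ := iha x hx
      obtain ⟨y', hy', hRy⟩ := ihb y hy
      exact ⟨x'.dot y', by rw [inst_dot, hx', hy']; rfl, .dot hRx hRy⟩

/-- Spine-level inversion for `MRel`. -/
lemma rel_cases {M N S T : Tm} (h : MRel M N S T) :
    (∃ us vs, S = Tm.apps M us ∧ T = Tm.apps N vs ∧ List.Forall₂ (MRel M N) us vs) ∨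
    (∃ hd us vs, S = Tm.apps (.name hd) us ∧ T = Tm.apps (.name hd) vs ∧
      List.Forall₂ (MRel M N) us vs) := by
  induction h with
  | refl t =>
      exact Or.inr ⟨t.spine.1, t.spine.2, t.spine.2, eq_apps_spine t, eq_apps_spine t,
        rel_refl_forall₂ M N _⟩
  | base => exact Or.inl ⟨[], [], rfl, rfl, List.Forall₂.nil⟩
  | @dot a a' b b' ha hb iha _ =>
      rcases iha with ⟨us, vs, rfl, rfl, hf⟩ | ⟨hd, us, vs, rfl, rfl, hf⟩
      · exact Or.inl ⟨us ++ [b], vs ++ [b'], (apps_append ..).symm, (apps_append ..).symm,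
          forall₂_append' hf (List.Forall₂.cons hb List.Forall₂.nil)⟩
      · exact Or.inr ⟨hd, us ++ [b], vs ++ [b'], (apps_append ..).symm, (apps_append ..).symm,
          forall₂_append' hf (List.Forall₂.cons hb List.Forall₂.nil)⟩

/-- Main simulation lemma. -/
lemma sim {P' : Program} (hP' : P'.Wf) (M N : Tm) (k : ℕ)
    (hM : M.ArityIs P' k) (hN : N.ArityIs P' k)
    (hcr : ∀ ts : List Tm, ts.length = k →
      CommonRed P' (Tm.apps M ts) (Tm.apps N ts)) :
    ∀ S, Terminates P' S → ∀ T, MRel M N S T → Terminates P' T := by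
  obtain ⟨rM, hrM, qs, hMeq, hMar⟩ := hM
  obtain ⟨rN, hrN, qsN, hNeq, hNar⟩ := hN
  rintro S ⟨f, hSf, hf⟩
  induction hSf using Relation.ReflTransGen.head_induction_on with
  | refl =>
      -- S = f is final
      intro T hrel
      rcases rel_cases hrel with ⟨us, vs, rfl, rfl, hfor⟩ | ⟨hd, us, vs, rfl, rfl, hfor⟩
      · -- spine-base case: the left side is M.us, final
        by_cases hk : us.length = k
        · -- then M.us would be a redex: contradiction with finality
          exfalso
          apply hf
          obtain ⟨A, hA⟩ := inst_total (ss := qs ++ us) rM.rhs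
            (fun v hv => by
              have := hP'.1 rM hrM v hv
              simp only [List.length_append]
              omega)
          exact ⟨A, rM, hrM, qs ++ us, by simp only [List.length_append]; omega,
            by rw [hMeq, apps_apps], hA⟩
        · -- both sides final
          refine ⟨_, .refl, ?_⟩
          rintro ⟨B, r, hr, ts, hlen, heq, hinst⟩
          rw [hNeq, apps_apps] at heq
          obtain ⟨hh, hts⟩ := apps_injective heq
          have : r = rN := hP'.2 r hr rN hrN hh.symm
          subst this
          have hle := hfor.length_eq
          subst hts
          simp only [List.length_append] at hlen
          omega
      · -- same-head case: T is final too
        refine ⟨_, .refl, ?_⟩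
        rintro ⟨B, r, hr, ts, hlen, heq, hinst⟩
        obtain ⟨hh, hts⟩ := apps_injective heq
        subst hts
        apply hf
        obtain ⟨A, hA⟩ := inst_total (ss := us) r.rhs
          (fun v hv => by
            have := hP'.1 r hr v hv
            have := hfor.length_eq
            omega)
        exact ⟨A, r, hr, us, by have := hfor.length_eq; omega, by rw [hh], hA⟩
  | head hstep hrest ih =>
      rename_i S S₁
      intro T hrel
      rcases rel_cases hrel with ⟨us, vs, rfl, rfl, hfor⟩ | ⟨hd, us, vs, rfl, rfl, hfor⟩
      · -- spine-base case: M.us steps, so us.length = k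
        obtain ⟨r, hr, ts, hlen, heq, hinst⟩ := hstep
        rw [hMeq, apps_apps] at heq
        obtain ⟨hh, hts⟩ := apps_injective heq
        have hrr : r = rM := hP'.2 r hr rM hrM hh.symm
        subst hrr; subst hts
        have hk : us.length = k := by
          have := hlen; simp at this; omega
        -- the same rule fires on M.vs
        have hfor' : List.Forall₂ (MRel M N) (qs ++ us) (qs ++ vs) :=
          forall₂_append' (rel_refl_forall₂ M N qs) hfor
        obtain ⟨T₁, hT₁, hRT₁⟩ := rel_inst hfor' r.rhs S₁ hinst
        have hstepT : Step P' (Tm.apps M vs) T₁ := by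
          refine ⟨r, hr, qs ++ vs, ?_, by rw [hMeq, apps_apps], hT₁⟩
          have := hfor.length_eq
          simp at hlen ⊢
          omega
        have hterm : Terminates P' (Tm.apps M vs) := by
          obtain ⟨g, hg1, hg2⟩ := ih T₁ hRT₁
          exact ⟨g, (Relation.ReflTransGen.head hstepT hg1), hg2⟩
        refine terminates_of_commonRed hP' ?_ hterm
        exact hcr vs (hfor.length_eq ▸ hk)
      · -- same-head case
        obtain ⟨r, hr, ts, hlen, heq, hinst⟩ := hstep
        obtain ⟨hh, hts⟩ := apps_injective heq
        subst hts
        obtain ⟨T₁, hT₁, hRT₁⟩ := rel_inst hfor r.rhs S₁ hinst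
        have hstepT : Step P' (Tm.apps (.name hd) vs) T₁ :=
          ⟨r, hr, vs, by rw [← hfor.length_eq]; omega, by rw [hh], hT₁⟩
        obtain ⟨g, hg1, hg2⟩ := ih T₁ hRT₁
        exact ⟨g, Relation.ReflTransGen.head hstepT hg1, hg2⟩

end Aux

theorem commonRed_ext_then_obsEq (P : Program) (hP : P.Wf) (M N : Tm) (k : ℕ)
    (hM : Tm.ArityIs P M k) (hN : Tm.ArityIs P N k)
    (h : ∀ ts : List Tm, ts.length = k →
      CommonRed P (Tm.apps M ts) (Tm.apps N ts)) :
    ObsEq P M N := by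
  intro P' hP' hsub X
  have arity_mono : ∀ t, Tm.ArityIs P t k → Tm.ArityIs P' t k := by
    rintro t ⟨r, hr, ts, h1, h2⟩
    exact ⟨r, hsub hr, ts, h1, h2⟩
  have cr_mono : ∀ a b, CommonRed P a b → CommonRed P' a b := by
    rintro a b ⟨t, h1, h2⟩
    exact ⟨t, steps_mono hsub h1, steps_mono hsub h2⟩
  constructor
  · intro hterm
    exact sim hP' M N k (arity_mono M hM) (arity_mono N hN)
      (fun ts hts => cr_mono _ _ (h ts hts)) _ hterm _
      (MRel.dot (MRel.refl X) MRel.base)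
  · intro hterm
    exact sim hP' N M k (arity_mono N hN) (arity_mono M hM)
      (fun ts hts => by obtain ⟨t, h1, h2⟩ := h ts hts; exact cr_mono _ _ ⟨t, h2, h1⟩) _ hterm _
      (MRel.dot (MRel.refl X) MRel.base)
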